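/- arXiv:1207.0550 — 3 statements merged into one kernel-verified Lean document; each statement's English description precedes it below -/
import Mathlib

section
/- Let ρ be a positive semidefinite d×d complex matrix with Tr ρ ≤ 1, and let X and Y be m×d complex matrices such that X†X ≤ Id and Y†Y ≤ Id (in the positive semidefinite order). Then ‖XρX† − YρY†‖₁ ≤ 2√(Tr((X−Y)ρ(X−Y)†)). -/
open scoped Kronecker ComplexConjugate ComplexOrder Matrix

namespace MIP

noncomputable section

abbrev Mat (d : ℕ) := Matrix (Fin d) (Fin d) ℂ

/-- Real part of the trace. -/
def rTr {m : Type*} [Fintype m] (M : Matrix m m ℂ) : ℝ := M.trace.re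

/-- Positive semidefinite square root (`0` if the matrix is not PSD). -/
def psqrt {m : Type*} [Fintype m] [DecidableEq m] (A : Matrix m m ℂ) : Matrix m m ℂ :=
  letI := Classical.propDecidable A.PosSemidef
  if h : A.PosSemidef then
    (h.1.eigenvectorUnitary : Matrix m m ℂ) * Matrix.diagonal ((↑) ∘ Real.sqrt ∘ h.1.eigenvalues) *
      (star h.1.eigenvectorUnitary : Matrix m m ℂ)
  else 0

/-- Loewner order `A ≤ B`. -/
def PSDle {m : Type*} [Fintype m] (A B : Matrix m m ℂ) : Prop := (B - A).PosSemidef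

/-- Trace norm of a square complex matrix. -/
def traceNorm {m : Type*} [Fintype m] [DecidableEq m] (M : Matrix m m ℂ) : ℝ :=
  rTr (psqrt (Mᴴ * M))

/-- `‖X‖_ρ² = Tr (X Xᴴ ρ)`. -/
def rhoNormSq {d : ℕ} (ρ X : Mat d) : ℝ := rTr (X * Xᴴ * ρ)

/-- `⟨ψ| M 0 ⊗ ⋯ ⊗ M (r-1) |ψ⟩` (real part). -/
def tExp {r d : ℕ} (ψ : (Fin r → Fin d) → ℂ) (M : Fin r → Mat d) : ℝ :=
  (∑ v : Fin r → Fin d, ∑ w : Fin r → Fin d,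
      conj (ψ v) * (∏ i, M i (v i) (w i)) * ψ w).re

/-- `⟨ψ| M 0 ⊗ ⋯ ⊗ M (r-1) |ψ⟩` (complex value). -/
def tExpC {r d : ℕ} (ψ : (Fin r → Fin d) → ℂ) (M : Fin r → Mat d) : ℂ :=
  ∑ v : Fin r → Fin d, ∑ w : Fin r → Fin d,
      conj (ψ v) * (∏ i, M i (v i) (w i)) * ψ w

/-- Invariance of a vector in `(ℂ^d)^{⊗r}` under all permutations of the factors. -/
def PermInvariant {r d : ℕ} (ψ : (Fin r → Fin d) → ℂ) : Prop :=
  ∀ σ : Equiv.Perm (Fin r), ∀ v, ψ (v ∘ σ) = ψ v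

/-- Reduced density matrix of `|ψ⟩⟨ψ|` on register `i`. -/
def red1 {r d : ℕ} (ψ : (Fin r → Fin d) → ℂ) (i : Fin r) : Mat d :=
  Matrix.of fun j k => ∑ v : Fin r → Fin d,
    if (v i).val = 0 then ψ (Function.update v i j) * conj (ψ (Function.update v i k)) else 0

/-- Reduced density matrix of `|ψ⟩⟨ψ|` on registers `i₁, i₂`. -/
def red2 {r d : ℕ} (ψ : (Fin r → Fin d) → ℂ) (i₁ i₂ : Fin r) :
    Matrix (Fin d × Fin d) (Fin d × Fin d) ℂ :=
  Matrix.of fun a b => ∑ v : Fin r → Fin d,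
    if (v i₁).val = 0 ∧ (v i₂).val = 0 then
      ψ (Function.update (Function.update v i₁ a.1) i₂ a.2) *
        conj (ψ (Function.update (Function.update v i₁ b.1) i₂ b.2))
    else 0

/-- A symmetric projective strategy with `r` provers, questions in `F^n`,
answers in `F`, on local dimension `d`. -/
structure Strategy (r n d : ℕ) (F : Type*) [Field F] [Fintype F] where
  ψ : (Fin r → Fin d) → ℂ
  A : (Fin n → F) → F → Mat d
  unit : ∑ v : Fin r → Fin d, Complex.normSq (ψ v) = 1
  perm : PermInvariant ψ
  herm : ∀ x a, (A x a).IsHermitian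
  proj : ∀ x a, A x a * A x a = A x a
  complete : ∀ x, ∑ a : F, A x a = 1

variable {F : Type*} [Field F] [Fintype F] [DecidableEq F]

/-- Consistency-test acceptance probability. -/
def consProb {r n d : ℕ} (S : Strategy r n d F) : ℝ :=
  (∑ x : Fin n → F, ∑ a : F, tExp S.ψ fun _ => S.A x a) / (Fintype.card F : ℝ) ^ n

/-- Linearity-test acceptance probability in direction `i`. -/
def linProbDir {r n d : ℕ} (S : Strategy r n d F) (i : Fin n) : ℝ :=
  (∑ x : Fin n → F, ∑ yi : F, ∑ zi : F,
      if yi ≠ x i ∧ zi ≠ x i ∧ yi ≠ zi then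
        ∑ α : F, ∑ β : F,
          tExp S.ψ fun j =>
            if j.val = 0 then S.A x (α * x i + β)
            else if j.val = 1 then S.A (Function.update x i yi) (α * yi + β)
            else if j.val = 2 then S.A (Function.update x i zi) (α * zi + β)
            else 1
      else 0) /
    ((Fintype.card F : ℝ) ^ n * ((Fintype.card F : ℝ) - 1) * ((Fintype.card F : ℝ) - 2))

/-- Linearity-test acceptance probability (averaged over the direction). -/
def linProb {r n d : ℕ} (S : Strategy r n d F) : ℝ :=
  (∑ i : Fin n, linProbDir S i) / n

/-- A multilinear function `F^k → F`. -/
def IsMultilinear {k : ℕ} (g : (Fin k → F) → F) : Prop :=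
  ∀ (i : Fin k) (x : Fin k → F), ∃ α β : F, ∀ t : F, g (Function.update x i t) = α * t + β

/-- First `k` coordinates `x_{≤k}`. -/
def xle {n k : ℕ} (hk : k ≤ n) (x : Fin n → F) : Fin k → F :=
  fun j => x (Fin.castLE hk j)

/-- Last `n - k` coordinates `x_{>k}`. -/
def xgt {n : ℕ} (k : ℕ) (hk : k ≤ n) (x : Fin n → F) : Fin (n - k) → F :=
  fun j => x ⟨k + j.val, by have := j.isLt; omega⟩

/-- The restriction `g(·, x_{k+1},…,x_ℓ)` of `g : F^ℓ → F` to its first `k` variables, the last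
`ℓ - k` variables being substituted with the corresponding coordinates of `x ∈ F^n`. -/
def midRestrict {n k ℓ : ℕ} (hkl : k ≤ ℓ) (hl : ℓ ≤ n) (g : (Fin ℓ → F) → F) (x : Fin n → F) :
    (Fin k → F) → F :=
  fun u => g fun j =>
    if h : j.val < k then u ⟨j.val, h⟩ else x ⟨j.val, by have := j.isLt; omega⟩

/-- A family of sub-measurements of arity `k`, with outcomes the multilinear functions
`F^k → F` (the matrices are indexed by all functions, vanishing on non-multilinear ones). -/
structure SubFamily (n d : ℕ) (F : Type*) [Field F] [Fintype F] [DecidableEq F] (k : ℕ) where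
  P : (Fin (n - k) → F) → ((Fin k → F) → F) → Mat d
  psd : ∀ y g, (P y g).PosSemidef
  ml : ∀ y g, ¬ IsMultilinear g → P y g = 0
  sub : ∀ y, (1 - ∑ g : (Fin k → F) → F, P y g).PosSemidef

/-- `cons(P,Q)` for arities `k ≤ ℓ`. -/
def consF {n d k ℓ : ℕ} (hkl : k ≤ ℓ) (hl : ℓ ≤ n)
    (P : SubFamily n d F k) (Q : SubFamily n d F ℓ)
    (ρ : Matrix (Fin d × Fin d) (Fin d × Fin d) ℂ) : ℝ :=
  (∑ x : Fin n → F, ∑ f : (Fin k → F) → F, ∑ g : (Fin ℓ → F) → F,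
      if f = midRestrict hkl hl g x then
        rTr ((P.P (xgt k (hkl.trans hl) x) f ⊗ₖ Q.P (xgt ℓ hl x) g) * ρ)
      else 0) / (Fintype.card F : ℝ) ^ n

/-- `inc(P,Q)` for arities `k ≤ ℓ`. -/
def incF {n d k ℓ : ℕ} (hkl : k ≤ ℓ) (hl : ℓ ≤ n)
    (P : SubFamily n d F k) (Q : SubFamily n d F ℓ)
    (ρ : Matrix (Fin d × Fin d) (Fin d × Fin d) ℂ) : ℝ :=
  (∑ x : Fin n → F, ∑ f : (Fin k → F) → F, ∑ g : (Fin ℓ → F) → F,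
      if f ≠ midRestrict hkl hl g x then
        rTr ((P.P (xgt k (hkl.trans hl) x) f ⊗ₖ Q.P (xgt ℓ hl x) g) * ρ)
      else 0) / (Fintype.card F : ℝ) ^ n

/-- `cons(P,Q)` for arbitrary arities (symmetric convention). -/
def consSym {n d k ℓ : ℕ} (hk : k ≤ n) (hl : ℓ ≤ n)
    (P : SubFamily n d F k) (Q : SubFamily n d F ℓ)
    (ρ : Matrix (Fin d × Fin d) (Fin d × Fin d) ℂ) : ℝ :=
  if h : k ≤ ℓ then consF h hl P Q ρ else consF (le_of_not_ge h) hk Q P ρ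

/-- `inc(P,A)` where `A` are the strategy's measurements (regarded as the arity-0 family). -/
def incA {n d k : ℕ} (hk : k ≤ n) (P : SubFamily n d F k)
    (A : (Fin n → F) → F → Mat d) (ρ : Matrix (Fin d × Fin d) (Fin d × Fin d) ℂ) : ℝ :=
  (∑ x : Fin n → F, ∑ g : (Fin k → F) → F, ∑ a : F,
      if a ≠ g (xle hk x) then rTr ((P.P (xgt k hk x) g ⊗ₖ A x a) * ρ) else 0) /
    (Fintype.card F : ℝ) ^ n

/-- `Tr_ρ(P)` for a family of sub-measurements, against the one-register density `ρ`. -/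
def trF {n d k : ℕ} (P : SubFamily n d F k) (ρ : Mat d) : ℝ :=
  (∑ y : Fin (n - k) → F, ∑ g : (Fin k → F) → F, rTr (P.P y g * ρ)) /
    (Fintype.card F : ℝ) ^ (n - k)

/-- Merge first `k` coordinates `u` and last `n - k` coordinates `y` into a point of `F^n`. -/
def merge {n k : ℕ} (hk : k ≤ n) (u : Fin k → F) (y : Fin (n - k) → F) : Fin n → F :=
  fun j => if h : j.val < k then u ⟨j.val, h⟩ else y ⟨j.val - k, by have := j.isLt; omega⟩

/-- `E_{x_{≤k}} Ŝ_x^g`, with the last coordinates fixed to `y`. -/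
def avgLow {n d k : ℕ} (hk : k ≤ n)
    (Sh : (Fin n → F) → ((Fin k → F) → F) → Mat d)
    (y : Fin (n - k) → F) (g : (Fin k → F) → F) : Mat d :=
  ((Fintype.card F : ℂ) ^ k)⁻¹ • ∑ u : Fin k → F, Sh (merge hk u y) g

/-- Feasibility for the self-improvement convex program. -/
def Feasible {n d k : ℕ} (hk : k ≤ n) (A : (Fin n → F) → F → Mat d)
    (Sh : (Fin n → F) → ((Fin k → F) → F) → Mat d) : Prop :=
  (∀ x g, ¬ IsMultilinear g → Sh x g = 0) ∧
    ∀ x a, PSDle (∑ g : (Fin k → F) → F,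
      if g (xle hk x) = a then Sh x g * (Sh x g)ᴴ else 0) (A x a)

/-- Objective of the self-improvement convex program. -/
def objective {n d k : ℕ} (hk : k ≤ n) (R : SubFamily n d F k) (ρ : Mat d)
    (Sh : (Fin n → F) → ((Fin k → F) → F) → Mat d) : ℝ :=
  (∑ x : Fin n → F, ∑ g : (Fin k → F) → F,
      rhoNormSq ρ (Sh x g - psqrt (R.P (xgt k hk x) g))) / (Fintype.card F : ℝ) ^ n

/-- Optimum value `ω` of the self-improvement convex program. -/
def progOpt {n d k : ℕ} (hk : k ≤ n) (A : (Fin n → F) → F → Mat d)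
    (R : SubFamily n d F k) (ρ : Mat d) : ℝ :=
  sInf {w | ∃ Sh, Feasible hk A Sh ∧ objective hk R ρ Sh = w}


/-- Remove the `i`-th coordinate: `x_{¬i}`. -/
def removeCoord {n : ℕ} (i : Fin n) (x : Fin n → F) : Fin (n - 1) → F :=
  fun j => if h : j.val < i.val then x ⟨j.val, by have := j.isLt; omega⟩
    else x ⟨j.val + 1, by have := j.isLt; omega⟩

/-- Partial trace over the middle factor of `ℂ^d ⊗ ℂ^d ⊗ ℂ^{d'}`. -/
def ptrace2 {d d' : ℕ} (σ : Matrix (Fin d × Fin d × Fin d') (Fin d × Fin d × Fin d') ℂ) :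
    Matrix (Fin d × Fin d') (Fin d × Fin d') ℂ :=
  Matrix.of fun a b => ∑ m : Fin d, σ (a.1, m, a.2) (b.1, m, b.2)

/-- Partial trace over the first factor of `ℂ^d ⊗ ℂ^{d'}`. -/
def ptrFst {d d' : ℕ} (σ : Matrix (Fin d × Fin d') (Fin d × Fin d') ℂ) :
    Matrix (Fin d') (Fin d') ℂ :=
  Matrix.of fun k l => ∑ m : Fin d, σ (m, k) (m, l)

/-- Partial trace over the second factor of `ℂ^d ⊗ ℂ^{d'}`. -/
def ptrSnd {d d' : ℕ} (σ : Matrix (Fin d × Fin d') (Fin d × Fin d') ℂ) : Mat d :=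
  Matrix.of fun i j => ∑ m : Fin d', σ (i, m) (j, m)



section PsqrtAux
open scoped MatrixOrder
variable {p : Type*} [Fintype p] [DecidableEq p]
private lemma st10_psqrt_eq_cfc {A : Matrix p p ℂ} (hA : A.PosSemidef) :
    psqrt A = CFC.sqrt A := by
  rw [CFC.sqrt_eq_cfc, cfc_nnreal_eq_real _ A, hA.1.cfc_eq, Matrix.IsHermitian.cfc,
    Unitary.conjStarAlgAut_apply, psqrt, dif_pos hA]
  congr 3
  funext i
  simp [Real.coe_toNNReal', max_eq_left (hA.eigenvalues_nonneg i)]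
private lemma st10_psqrt_psd {A : Matrix p p ℂ} (hA : A.PosSemidef) : (psqrt A).PosSemidef := by
  rw [st10_psqrt_eq_cfc hA, ← Matrix.nonneg_iff_posSemidef]
  exact CFC.sqrt_nonneg A
private lemma st10_psqrt_mul_self {A : Matrix p p ℂ} (hA : A.PosSemidef) :
    psqrt A * psqrt A = A := by
  rw [st10_psqrt_eq_cfc hA]
  exact CFC.sqrt_mul_sqrt_self A (Matrix.nonneg_iff_posSemidef.mpr hA)
private lemma st10_eq_psqrt {A S : Matrix p p ℂ} (hS : S.PosSemidef) (hA : A.PosSemidef)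
    (h : S ^ 2 = A) : S = psqrt A := by
  rw [st10_psqrt_eq_cfc hA]
  exact (CFC.sqrt_unique (by rw [← h, pow_two]) (Matrix.nonneg_iff_posSemidef.mpr hS)).symm
end PsqrtAux

section Statement10Aux

variable {p q : Type*} [Fintype p] [Fintype q]

private lemma st10_trace_sq_re (A : Matrix p q ℂ) [DecidableEq q] :
    ((Aᴴ * A).trace).re = ∑ z : p × q, Complex.normSq (A z.1 z.2) := by
  simp only [Matrix.trace, Matrix.diag, Matrix.mul_apply, Matrix.conjTranspose_apply,
    Complex.re_sum, Fintype.sum_prod_type]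
  rw [Finset.sum_comm]
  congr 1
  ext i
  congr 1
  ext j
  simp [Complex.normSq_apply, Complex.mul_re]

private lemma st10_trace_cs [DecidableEq q] (A B : Matrix p q ℂ) :
    ‖(Aᴴ * B).trace‖ ≤
      Real.sqrt ((Aᴴ * A).trace.re) * Real.sqrt ((Bᴴ * B).trace.re) := by
  classical
  set a : EuclideanSpace ℂ (p × q) := (WithLp.equiv 2 _).symm (fun z => A z.1 z.2) with ha
  set b : EuclideanSpace ℂ (p × q) := (WithLp.equiv 2 _).symm (fun z => B z.1 z.2) with hb
  have h1 : (Aᴴ * B).trace = inner ℂ a b := by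
    simp only [PiLp.inner_apply, RCLike.inner_apply, Matrix.trace, Matrix.diag,
      Matrix.mul_apply, Matrix.conjTranspose_apply, Fintype.sum_prod_type, ha, hb,
      WithLp.equiv_symm_apply, PiLp.toLp_apply]
    rw [Finset.sum_comm]
    refine Finset.sum_congr rfl fun _ _ => Finset.sum_congr rfl fun _ _ => ?_
    rw [mul_comm]; rfl
  have h2 : ‖a‖ = Real.sqrt ((Aᴴ * A).trace.re) := by
    rw [EuclideanSpace.norm_eq, st10_trace_sq_re]
    congr 1
    refine Finset.sum_congr rfl fun z _ => ?_
    simp [ha, WithLp.equiv_symm_apply, PiLp.toLp_apply, Complex.normSq_eq_norm_sq]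
  have h3 : ‖b‖ = Real.sqrt ((Bᴴ * B).trace.re) := by
    rw [EuclideanSpace.norm_eq, st10_trace_sq_re]
    congr 1
    refine Finset.sum_congr rfl fun z _ => ?_
    simp [hb, WithLp.equiv_symm_apply, PiLp.toLp_apply, Complex.normSq_eq_norm_sq]
  rw [h1, ← h2, ← h3]
  exact norm_inner_le_norm a b

private lemma st10_trace_conjT_self_re_nonneg [DecidableEq q] (A : Matrix p q ℂ) :
    0 ≤ ((Aᴴ * A).trace).re := by
  rw [st10_trace_sq_re]
  exact Finset.sum_nonneg fun z _ => Complex.normSq_nonneg _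

private lemma st10_trace_psd_mul_re_nonneg {P Q : Matrix p p ℂ} [DecidableEq p]
    (hP : P.PosSemidef) (hQ : Q.PosSemidef) : 0 ≤ ((P * Q).trace).re := by
  set s := psqrt P with hs
  set r := psqrt Q with hr
  have hP2 : s * s = P := st10_psqrt_mul_self hP
  have hQ2 : r * r = Q := st10_psqrt_mul_self hQ
  have hsh : sᴴ = s := (st10_psqrt_psd hP).isHermitian
  have hrh : rᴴ = r := (st10_psqrt_psd hQ).isHermitian
  have key : (P * Q).trace = ((r * s)ᴴ * (r * s)).trace := by
    rw [Matrix.conjTranspose_mul, hsh, hrh]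
    rw [show s * r * (r * s) = s * (r * r) * s by noncomm_ring, hQ2]
    rw [show P * Q = s * (s * Q) by rw [← Matrix.mul_assoc, hP2]]
    rw [Matrix.trace_mul_comm s (s * Q), Matrix.mul_assoc]
  rw [key]
  exact st10_trace_conjT_self_re_nonneg _

private lemma st10_trace_psd_re_nonneg {P : Matrix p p ℂ} [DecidableEq p]
    (hP : P.PosSemidef) : 0 ≤ (P.trace).re := by
  simpa using st10_trace_psd_mul_re_nonneg hP (Matrix.PosSemidef.one)

/-- Trace-norm duality: there is a contraction `W` with `Re Tr(W H) = ‖H‖₁`. -/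
private lemma st10_traceNorm_dual {m : ℕ} {H : Matrix (Fin m) (Fin m) ℂ}
    (hH : H.IsHermitian) :
    ∃ W : Matrix (Fin m) (Fin m) ℂ, (1 - Wᴴ * W).PosSemidef ∧
      ((W * H).trace).re = traceNorm H := by
  classical
  set V : Matrix (Fin m) (Fin m) ℂ := (hH.eigenvectorUnitary : Matrix (Fin m) (Fin m) ℂ) with hVdef
  have hVsV : star V * V = 1 := Matrix.mem_unitaryGroup_iff'.mp hH.eigenvectorUnitary.2
  have hVVs : V * star V = 1 := Matrix.mem_unitaryGroup_iff.mp hH.eigenvectorUnitary.2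
  have hmul : ∀ f g : Fin m → ℂ,
      (V * Matrix.diagonal f * star V) * (V * Matrix.diagonal g * star V) =
        V * Matrix.diagonal (fun i => f i * g i) * star V := by
    intro f g
    have : Matrix.diagonal f * Matrix.diagonal g = Matrix.diagonal (fun i => f i * g i) := by
      rw [Matrix.diagonal_mul_diagonal]
    calc (V * Matrix.diagonal f * star V) * (V * Matrix.diagonal g * star V)
        = V * Matrix.diagonal f * (star V * V) * Matrix.diagonal g * star V := by
          simp only [Matrix.mul_assoc]
      _ = V * (Matrix.diagonal f * Matrix.diagonal g) * star V := by
          rw [hVsV]; simp only [Matrix.mul_one, Matrix.mul_assoc]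
      _ = V * Matrix.diagonal (fun i => f i * g i) * star V := by rw [this]
  set lr : Fin m → ℝ := hH.eigenvalues with hlr
  set lam : Fin m → ℂ := fun i => (lr i : ℂ) with hlam
  have hspec : H = V * Matrix.diagonal lam * star V := by
    simpa [hlam, hlr, Function.comp_def] using hH.spectral_theorem
  have htr : ∀ f : Fin m → ℂ, (V * Matrix.diagonal f * star V).trace = ∑ i, f i := by
    intro f
    rw [Matrix.trace_mul_cycle, hVsV, Matrix.one_mul, Matrix.trace_diagonal]
  have hconj : ∀ g : Fin m → ℝ,
      (V * Matrix.diagonal (fun i => (g i : ℂ)) * star V)ᴴ =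
        V * Matrix.diagonal (fun i => (g i : ℂ)) * star V := by
    intro g
    simp only [Matrix.conjTranspose_mul, Matrix.diagonal_conjTranspose,
      Matrix.star_eq_conjTranspose, Matrix.conjTranspose_conjTranspose]
    have : (star fun i => ((g i : ℂ))) = fun i => ((g i : ℂ)) := by
      funext i; simp [Complex.conj_ofReal]
    rw [this, Matrix.mul_assoc]
  have hpsdconj : ∀ g : Fin m → ℝ, (∀ i, 0 ≤ g i) →
      (V * Matrix.diagonal (fun i => (g i : ℂ)) * star V).PosSemidef := by
    intro g hg
    have hd : (Matrix.diagonal (fun i => (g i : ℂ))).PosSemidef :=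
      Matrix.posSemidef_diagonal_iff.mpr fun i => Complex.zero_le_real.mpr (hg i)
    simpa [Matrix.star_eq_conjTranspose] using hd.mul_mul_conjTranspose_same V
  -- the contraction W
  refine ⟨V * Matrix.diagonal (fun i => (Real.sign (lr i) : ℂ)) * star V, ?_, ?_⟩
  · have hWc := hconj (fun i => Real.sign (lr i))
    rw [hWc, hmul]
    have hone : (1 : Matrix (Fin m) (Fin m) ℂ) =
        V * Matrix.diagonal (fun _ : Fin m => (1 : ℂ)) * star V := by
      simp [Matrix.diagonal_one, hVVs]
    rw [hone]
    have : V * Matrix.diagonal (fun _ : Fin m => (1 : ℂ)) * star V -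
        V * Matrix.diagonal (fun i => (Real.sign (lr i) : ℂ) * (Real.sign (lr i) : ℂ)) * star V
        = V * Matrix.diagonal
            (fun i => ((1 - Real.sign (lr i) * Real.sign (lr i) : ℝ) : ℂ)) * star V := by
      rw [← Matrix.sub_mul, ← Matrix.mul_sub, Matrix.diagonal_sub]
      congr 2
      funext i
      push_cast
      ring
    rw [this]
    apply hpsdconj
    intro i
    rcases Real.sign_apply_eq (lr i) with h | h | h <;> rw [h] <;> norm_num
  · -- Re Tr (W * H) = traceNorm H
    have hsign : ∀ i, Real.sign (lr i) * lr i = |lr i| := by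
      intro i
      rcases lt_trichotomy (lr i) 0 with h | h | h
      · rw [Real.sign_of_neg h, abs_of_neg h]; ring
      · rw [h]; simp
      · rw [Real.sign_of_pos h, abs_of_pos h]; ring
    have hWH : ((V * Matrix.diagonal (fun i => (Real.sign (lr i) : ℂ)) * star V) * H).trace
        = ∑ i, ((|lr i| : ℝ) : ℂ) := by
      rw [hspec, hmul, htr]
      refine Finset.sum_congr rfl fun i _ => ?_
      rw [hlam, ← Complex.ofReal_mul, hsign i]
    have hTN : traceNorm H = ∑ i, |lr i| := by
      have hHH : Hᴴ * H = H * H := by rw [hH.eq]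
      have hpsd : (Hᴴ * H).PosSemidef := Matrix.posSemidef_conjTranspose_mul_self H
      have hSpsd : (V * Matrix.diagonal (fun i => ((|lr i| : ℝ) : ℂ)) * star V).PosSemidef :=
        hpsdconj _ (fun i => abs_nonneg _)
      have hSsq : (V * Matrix.diagonal (fun i => ((|lr i| : ℝ) : ℂ)) * star V) ^ 2 = Hᴴ * H := by
        have hdd : (Matrix.diagonal (fun i => ((|lr i| : ℝ) : ℂ) * ((|lr i| : ℝ) : ℂ)))
            = Matrix.diagonal (fun i => lam i * lam i) := by
          have hfun : (fun i => ((|lr i| : ℝ) : ℂ) * ((|lr i| : ℝ) : ℂ))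
              = fun i => lam i * lam i := by
            funext i
            simp only [hlam]
            rw [← Complex.ofReal_mul, ← Complex.ofReal_mul, abs_mul_abs_self]
          rw [hfun]
        rw [pow_two, hmul, hHH]
        conv_rhs => rw [hspec, hmul]
        rw [hdd]
      have hsqrt : V * Matrix.diagonal (fun i => ((|lr i| : ℝ) : ℂ)) * star V = psqrt (Hᴴ * H) :=
        st10_eq_psqrt hSpsd hpsd hSsq
      have : psqrt (Hᴴ * H) = psqrt (Hᴴ * H) := rfl
      rw [traceNorm, this, ← hsqrt, rTr, htr]
      rw [Complex.re_sum]
      refine Finset.sum_congr rfl fun i _ => ?_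
      exact Complex.ofReal_re _
    rw [hWH, hTN, Complex.re_sum]
    refine Finset.sum_congr rfl fun i _ => ?_
    exact Complex.ofReal_re _

end Statement10Aux

theorem statement10 (d m : ℕ) (ρ : Mat d) (X Y : Matrix (Fin m) (Fin d) ℂ)
    (hρ : ρ.PosSemidef) (hρ1 : rTr ρ ≤ 1)
    (hX : PSDle (Xᴴ * X) 1) (hY : PSDle (Yᴴ * Y) 1) :
    traceNorm (X * ρ * Xᴴ - Y * ρ * Yᴴ) ≤
      2 * Real.sqrt (rTr ((X - Y) * ρ * (X - Y)ᴴ)) := by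
  classical
  have hρh : ρᴴ = ρ := hρ.isHermitian
  set s : Mat d := psqrt ρ with hsdef
  have hss : s * s = ρ := st10_psqrt_mul_self hρ
  have hsh : sᴴ = s := (st10_psqrt_psd hρ).isHermitian
  set D : Matrix (Fin m) (Fin d) ℂ := X - Y with hDdef
  set H : Matrix (Fin m) (Fin m) ℂ := X * ρ * Xᴴ - Y * ρ * Yᴴ with hHdef
  have hH : H.IsHermitian := by
    show Hᴴ = H
    rw [hHdef]
    simp only [Matrix.conjTranspose_sub, Matrix.conjTranspose_mul,
      Matrix.conjTranspose_conjTranspose, hρh, Matrix.mul_assoc]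
  set t : ℝ := rTr (D * ρ * Dᴴ) with htdef
  have ht : t = ((D * ρ * Dᴴ).trace).re := rfl
  -- generic trace bound lemma
  have key : ∀ (N : Matrix (Fin m) (Fin d) ℂ),
      ((N * s)ᴴ * (N * s)).trace = ((Nᴴ * N) * ρ).trace := by
    intro N
    have h1 : (N * s) * (s * Nᴴ) = N * ρ * Nᴴ := by
      rw [← hss]; simp only [Matrix.mul_assoc]
    rw [Matrix.conjTranspose_mul, hsh, Matrix.trace_mul_comm (s * Nᴴ) (N * s), h1,
      Matrix.trace_mul_cycle N ρ Nᴴ]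
  have contract_bound : ∀ (hops : PSDle (Xᴴ * X) 1) (N : Matrix (Fin m) (Fin d) ℂ),
      True := fun _ _ => trivial
  have norm_bound : ∀ (Z : Matrix (Fin m) (Fin d) ℂ), PSDle (Zᴴ * Z) 1 →
      ((Z * s)ᴴ * (Z * s)).trace.re ≤ 1 := by
    intro Z hZ
    rw [key]
    have h1 : 0 ≤ (((1 - Zᴴ * Z) * ρ).trace).re := st10_trace_psd_mul_re_nonneg hZ hρ
    have h2 : ((1 - Zᴴ * Z) * ρ).trace = ρ.trace - ((Zᴴ * Z) * ρ).trace := by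
      rw [Matrix.sub_mul, Matrix.one_mul, Matrix.trace_sub]
    rw [h2, Complex.sub_re] at h1
    have h3 : (ρ.trace).re ≤ 1 := hρ1
    linarith
  obtain ⟨W, hW, hWH⟩ := st10_traceNorm_dual hH
  have contraction : ∀ (M : Matrix (Fin m) (Fin d) ℂ),
      ((W * M)ᴴ * (W * M)).trace.re ≤ (Mᴴ * M).trace.re := by
    intro M
    have hpsd : (Mᴴ * (1 - Wᴴ * W) * M).PosSemidef := hW.conjTranspose_mul_mul_same M
    have h1 : 0 ≤ ((Mᴴ * (1 - Wᴴ * W) * M).trace).re := st10_trace_psd_re_nonneg hpsd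
    have h2 : Mᴴ * (1 - Wᴴ * W) * M = Mᴴ * M - (W * M)ᴴ * (W * M) := by
      rw [Matrix.conjTranspose_mul, Matrix.mul_sub, Matrix.mul_one, Matrix.sub_mul]
      simp only [Matrix.mul_assoc]
    rw [h2, Matrix.trace_sub, Complex.sub_re] at h1
    linarith
  have hsplit : H = D * ρ * Xᴴ + Y * ρ * Dᴴ := by
    simp only [hHdef, hDdef, Matrix.conjTranspose_sub, Matrix.sub_mul, Matrix.mul_sub]
    abel
  -- bound 1
  have e1 : (W * (D * ρ * Xᴴ)).trace = ((X * s)ᴴ * (W * (D * s))).trace := by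
    rw [Matrix.conjTranspose_mul, hsh, Matrix.trace_mul_comm (s * Xᴴ) (W * (D * s)), ← hss]
    simp only [Matrix.mul_assoc]
  have e2 : (W * (Y * ρ * Dᴴ)).trace = ((D * s)ᴴ * (W * (Y * s))).trace := by
    rw [Matrix.conjTranspose_mul, hsh, Matrix.trace_mul_comm (s * Dᴴ) (W * (Y * s)), ← hss]
    simp only [Matrix.mul_assoc]
  have hDs : ((D * s)ᴴ * (D * s)).trace.re = t := by
    rw [key, ht, Matrix.trace_mul_cycle D ρ Dᴴ]
  have ht0 : 0 ≤ t := by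
    rw [← hDs]; exact st10_trace_conjT_self_re_nonneg _
  have sqrt_t_nonneg : 0 ≤ Real.sqrt t := Real.sqrt_nonneg t
  have bound1 : ((W * (D * ρ * Xᴴ)).trace).re ≤ Real.sqrt t := by
    have h := st10_trace_cs (X * s) (W * (D * s))
    have hre : ((W * (D * ρ * Xᴴ)).trace).re ≤ ‖((X * s)ᴴ * (W * (D * s))).trace‖ := by
      rw [e1]
      exact (Complex.re_le_norm _).trans_eq rfl
    have hA : Real.sqrt (((X * s)ᴴ * (X * s)).trace.re) ≤ 1 := by
      rw [show (1 : ℝ) = Real.sqrt 1 by rw [Real.sqrt_one]]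
      exact Real.sqrt_le_sqrt (norm_bound X hX)
    have hWDs : ((W * (D * s))ᴴ * (W * (D * s))).trace.re ≤ t := by
      have := contraction (D * s)
      linarith [hDs ▸ this]
    have hB : Real.sqrt (((W * (D * s))ᴴ * (W * (D * s))).trace.re) ≤ Real.sqrt t :=
      Real.sqrt_le_sqrt hWDs
    calc ((W * (D * ρ * Xᴴ)).trace).re
        ≤ Real.sqrt (((X * s)ᴴ * (X * s)).trace.re) *
            Real.sqrt (((W * (D * s))ᴴ * (W * (D * s))).trace.re) := hre.trans h
      _ ≤ 1 * Real.sqrt t :=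
          mul_le_mul hA hB (Real.sqrt_nonneg _) (by norm_num)
      _ = Real.sqrt t := one_mul _
  have bound2 : ((W * (Y * ρ * Dᴴ)).trace).re ≤ Real.sqrt t := by
    have h := st10_trace_cs (D * s) (W * (Y * s))
    have hre : ((W * (Y * ρ * Dᴴ)).trace).re ≤ ‖((D * s)ᴴ * (W * (Y * s))).trace‖ := by
      rw [e2]
      exact (Complex.re_le_norm _).trans_eq rfl
    have hA : Real.sqrt (((D * s)ᴴ * (D * s)).trace.re) = Real.sqrt t := by rw [hDs]
    have hWYs : ((W * (Y * s))ᴴ * (W * (Y * s))).trace.re ≤ 1 :=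
      (contraction (Y * s)).trans (norm_bound Y hY)
    have hB : Real.sqrt (((W * (Y * s))ᴴ * (W * (Y * s))).trace.re) ≤ 1 := by
      rw [show (1 : ℝ) = Real.sqrt 1 by rw [Real.sqrt_one]]
      exact Real.sqrt_le_sqrt (by simpa using hWYs)
    calc ((W * (Y * ρ * Dᴴ)).trace).re
        ≤ Real.sqrt (((D * s)ᴴ * (D * s)).trace.re) *
            Real.sqrt (((W * (Y * s))ᴴ * (W * (Y * s))).trace.re) := hre.trans h
      _ ≤ Real.sqrt t * 1 := mul_le_mul_of_nonneg_left hB (by rw [hA]; exact sqrt_t_nonneg) |>.trans_eq (by rw [hA])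
      _ = Real.sqrt t := mul_one _
  have hfinal : ((W * H).trace).re ≤ 2 * Real.sqrt t := by
    rw [hsplit, Matrix.mul_add, Matrix.trace_add, Complex.add_re]
    linarith
  calc traceNorm H = ((W * H).trace).re := hWH.symm
    _ ≤ 2 * Real.sqrt t := hfinal


end

end MIP
end

section
/- Let I be a finite index set, let {A_i}_{i∈I} and {B_i}_{i∈I} be positive semidefinite d×d complex matrices with Σ_{i∈I} A_i ≤ Id and Σ_{i∈I} B_i ≤ Id, and let ρ be a positive semidefinite d×d matrix with Tr ρ ≤ 1. Then ‖Σ_{i∈I} (√(A_i) ρ √(A_i) − √(B_i) ρ √(B_i))‖₁ ≤ 2 (Σ_{i∈I} Tr((√(A_i) − √(B_i))² ρ))^{1/2}. -/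
open scoped Kronecker ComplexConjugate ComplexOrder Matrix

namespace MIP

noncomputable section

variable {F : Type*} [Field F] [Fintype F] [DecidableEq F]

open scoped MatrixOrder in
def _root_.Matrix.PosSemidef.sqrt {d : ℕ} {A : Mat d} (_hA : A.PosSemidef) : Mat d := CFC.sqrt A

open scoped MatrixOrder in
theorem _root_.Matrix.PosSemidef.sqrt_mul_self {d : ℕ} {A : Mat d} (hA : A.PosSemidef) :
    hA.sqrt * hA.sqrt = A :=
  CFC.sqrt_mul_sqrt_self A hA.nonneg

open scoped MatrixOrder in
theorem _root_.Matrix.PosSemidef.posSemidef_sqrt {d : ℕ} {A : Mat d} (hA : A.PosSemidef) :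
    hA.sqrt.PosSemidef :=
  Matrix.nonneg_iff_posSemidef.mp (CFC.sqrt_nonneg A)

open scoped MatrixOrder in
theorem _root_.Matrix.PosSemidef.eq_sqrt_of_sq_eq {d : ℕ} {A B : Mat d} (hB : B.PosSemidef)
    (hA : A.PosSemidef) (h : B ^ 2 = A) : B = hA.sqrt :=
  (CFC.sqrt_unique (by rw [← sq]; exact h) hB.nonneg).symm

section AuxStatement11
variable {d : ℕ}


lemma rTr_psd_nonneg {M : Mat d} (hM : M.PosSemidef) : 0 ≤ M.trace.re := by
  have h : ∀ i, 0 ≤ (M i i).re := by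
    intro i
    have h0 := hM.diag_nonneg (i := i)
    exact (Complex.le_def.mp h0).1
  rw [Matrix.trace, Complex.re_sum]
  exact Finset.sum_nonneg fun i _ => h i

lemma trace_mul_psd_re_nonneg {P Q : Mat d} (hP : P.PosSemidef) (hQ : Q.PosSemidef) :
    0 ≤ ((P * Q).trace).re := by
  have h : (P * Q).trace = (hP.sqrt * Q * hP.sqrt).trace := by
    conv_lhs => rw [← hP.sqrt_mul_self]
    rw [Matrix.mul_assoc, Matrix.trace_mul_comm]
  rw [h]
  have hpsd : (hP.sqrt * Q * hP.sqrt).PosSemidef := by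
    have := hQ.mul_mul_conjTranspose_same hP.sqrt
    rwa [hP.posSemidef_sqrt.1.eq] at this
  exact rTr_psd_nonneg hpsd

lemma re_trace_sandwich_le {T W : Mat d} (hT : T.PosSemidef)
    (hW : ((1 : Mat d) - W * W).PosSemidef) : ((W * T * W).trace).re ≤ T.trace.re := by
  have h1 : (W * T * W).trace = (T * (W * W)).trace := by
    rw [Matrix.trace_mul_cycle, ← Matrix.mul_assoc, Matrix.trace_mul_comm, Matrix.mul_assoc]
  have h2 := trace_mul_psd_re_nonneg hT hW
  have h3 : T * ((1 : Mat d) - W * W) = T - T * (W * W) := by rw [mul_sub, mul_one]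
  rw [h3, Matrix.trace_sub, Complex.sub_re] at h2
  rw [h1]; linarith

lemma cs_scalar {ι : Type*} [Fintype ι] (f g : ι → ℂ) :
    (∑ p, (starRingEnd ℂ) (f p) * g p).re ≤
      Real.sqrt (∑ p, ‖f p‖ ^ 2) * Real.sqrt (∑ p, ‖g p‖ ^ 2) := by
  let u : EuclideanSpace ℂ ι := WithLp.toLp 2 f
  let v : EuclideanSpace ℂ ι := WithLp.toLp 2 g
  have h1 : (inner ℂ u v : ℂ) = ∑ p, (starRingEnd ℂ) (f p) * g p := by
    rw [PiLp.inner_apply]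
    simp [u, v, mul_comm]
  calc (∑ p, (starRingEnd ℂ) (f p) * g p).re = (inner ℂ u v : ℂ).re := by rw [h1]
    _ ≤ ‖(inner ℂ u v : ℂ)‖ := Complex.re_le_norm _
    _ ≤ ‖u‖ * ‖v‖ := norm_inner_le_norm u v
    _ = _ := by rw [EuclideanSpace.norm_eq, EuclideanSpace.norm_eq]

lemma trace_conj_mul {ι : Type*} [Fintype ι] (Z V : ι → Mat d) :
    ∑ i, ((Z i)ᴴ * V i).trace
      = ∑ p : ι × Fin d × Fin d, (starRingEnd ℂ) (Z p.1 p.2.1 p.2.2) * V p.1 p.2.1 p.2.2 := by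
  rw [Fintype.sum_prod_type]
  refine Finset.sum_congr rfl fun i _ => ?_
  rw [Fintype.sum_prod_type, Matrix.trace]
  simp only [Matrix.diag, Matrix.mul_apply, Matrix.conjTranspose_apply]
  rw [Finset.sum_comm]
  simp [RCLike.star_def]

lemma cs_matrix {ι : Type*} [Fintype ι] (X Y : ι → Mat d) :
    (∑ i, ((X i)ᴴ * Y i).trace).re ≤
      Real.sqrt (∑ i, ((X i)ᴴ * X i).trace.re) * Real.sqrt (∑ i, ((Y i)ᴴ * Y i).trace.re) := by
  have hXX : ∀ (Z : ι → Mat d), ∑ i, ((Z i)ᴴ * Z i).trace.re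
      = ∑ p : ι × Fin d × Fin d, ‖Z p.1 p.2.1 p.2.2‖ ^ 2 := by
    intro Z
    rw [← Complex.re_sum, trace_conj_mul]
    rw [Complex.re_sum]
    refine Finset.sum_congr rfl fun p _ => ?_
    rw [mul_comm, Complex.mul_conj]
    rw [Complex.ofReal_re, ← Complex.sq_norm]
  rw [trace_conj_mul, hXX, hXX]
  exact cs_scalar _ _

open scoped MatrixOrder in
lemma psqrt_eq_sqrt {A : Mat d} (hA : A.PosSemidef) : psqrt A = hA.sqrt := by
  rw [psqrt, dif_pos hA, Matrix.PosSemidef.sqrt, CFC.sqrt_eq_cfc, cfc_nnreal_eq_real _ A hA.nonneg,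
    hA.1.cfc_eq]
  simp only [Matrix.IsHermitian.cfc, Unitary.conjStarAlgAut_apply]
  congr 3
  funext i
  simp [Real.coe_sqrt, hA.eigenvalues_nonneg i]

lemma sign_mul_self (x : ℝ) : Real.sign x * x = |x| := by
  rcases lt_trichotomy x 0 with h|h|h
  · rw [Real.sign_of_neg h, abs_of_neg h]; ring
  · simp [h]
  · rw [Real.sign_of_pos h, abs_of_pos h]; ring

lemma exists_contraction {M : Mat d} (hM : M.IsHermitian) :
    ∃ W : Mat d, Wᴴ = W ∧ ((1 : Mat d) - W * W).PosSemidef ∧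
      (psqrt (Mᴴ * M)).trace.re = ((W * M).trace).re := by
  classical
  set U : Mat d := (hM.eigenvectorUnitary : Mat d) with hU_def
  have hU1 : U * Uᴴ = 1 := by
    have := Matrix.mem_unitaryGroup_iff.mp (hM.eigenvectorUnitary).2
    simpa [Matrix.star_eq_conjTranspose] using this
  have hU2 : Uᴴ * U = 1 := by
    have := Matrix.mem_unitaryGroup_iff'.mp (hM.eigenvectorUnitary).2
    simpa [Matrix.star_eq_conjTranspose] using this
  set lam : Fin d → ℝ := hM.eigenvalues with hlam_def
  have hspec : M = U * Matrix.diagonal (fun i => (lam i : ℂ)) * Uᴴ := by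
    have := hM.spectral_theorem
    rw [this]
    rfl
  have key : ∀ f g : Fin d → ℝ,
      (U * Matrix.diagonal (fun i => (f i : ℂ)) * Uᴴ) *
          (U * Matrix.diagonal (fun i => (g i : ℂ)) * Uᴴ)
        = U * Matrix.diagonal (fun i => ((f i * g i : ℝ) : ℂ)) * Uᴴ := by
    intro f g
    simp only [Matrix.mul_assoc]
    rw [← Matrix.mul_assoc Uᴴ U, hU2, one_mul, ← Matrix.mul_assoc (Matrix.diagonal _),
      Matrix.diagonal_mul_diagonal]
    congr 2
    funext i
    push_cast
    ring
  have tr_key : ∀ f : Fin d → ℝ,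
      (U * Matrix.diagonal (fun i => (f i : ℂ)) * Uᴴ).trace = ∑ i, (f i : ℂ) := by
    intro f
    rw [Matrix.trace_mul_cycle, hU2, one_mul, Matrix.trace_diagonal]
  have psd_key : ∀ f : Fin d → ℝ, (∀ i, 0 ≤ f i) →
      (U * Matrix.diagonal (fun i => (f i : ℂ)) * Uᴴ).PosSemidef := by
    intro f hf
    have hd : (Matrix.diagonal (fun i => ((f i : ℝ) : ℂ))).PosSemidef :=
      Matrix.posSemidef_diagonal_iff.mpr fun i =>
        Complex.le_def.mpr ⟨by simpa using hf i, by simp⟩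
    have := hd.mul_mul_conjTranspose_same U
    exact this
  refine ⟨U * Matrix.diagonal (fun i => ((Real.sign (lam i) : ℝ) : ℂ)) * Uᴴ, ?_, ?_, ?_⟩
  · rw [Matrix.conjTranspose_mul, Matrix.conjTranspose_mul, Matrix.conjTranspose_conjTranspose,
      Matrix.diagonal_conjTranspose]
    simp [Matrix.mul_assoc, Function.comp, Pi.star_def, Complex.star_def, Complex.conj_ofReal]
  · have h2 : U * Matrix.diagonal
        (fun i => ((1 - Real.sign (lam i) * Real.sign (lam i) : ℝ) : ℂ)) * Uᴴ
        = (1 : Mat d) - (U * Matrix.diagonal (fun i => ((Real.sign (lam i) : ℝ) : ℂ)) * Uᴴ) *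
            (U * Matrix.diagonal (fun i => ((Real.sign (lam i) : ℝ) : ℂ)) * Uᴴ) := by
      rw [key]
      have hd : (Matrix.diagonal fun i =>
          ((1 - Real.sign (lam i) * Real.sign (lam i) : ℝ) : ℂ))
          = 1 - Matrix.diagonal (fun i => ((Real.sign (lam i) * Real.sign (lam i) : ℝ) : ℂ)) := by
        ext j k
        by_cases h : j = k
        · subst h
          simp [Matrix.diagonal_apply_eq, Matrix.one_apply_eq, Matrix.sub_apply]
        · simp [Matrix.diagonal_apply_ne _ h, Matrix.one_apply_ne h, Matrix.sub_apply]
      rw [hd, Matrix.mul_sub, Matrix.sub_mul, Matrix.mul_one, hU1]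
    rw [← h2]
    refine psd_key _ fun i => ?_
    rcases lt_trichotomy (lam i) 0 with h|h|h
    · rw [Real.sign_of_neg h]; norm_num
    · simp [h]
    · rw [Real.sign_of_pos h]; norm_num
  · have hMM : Mᴴ * M = U * Matrix.diagonal (fun i => ((lam i * lam i : ℝ) : ℂ)) * Uᴴ := by
      rw [hM.eq, hspec, key]
    have hMMpsd : (Mᴴ * M).PosSemidef := Matrix.posSemidef_conjTranspose_mul_self M
    have habs : (U * Matrix.diagonal (fun i => ((|lam i| : ℝ) : ℂ)) * Uᴴ).PosSemidef :=
      psd_key _ fun i => abs_nonneg _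
    have hsq : (U * Matrix.diagonal (fun i => ((|lam i| : ℝ) : ℂ)) * Uᴴ) ^ 2 = Mᴴ * M := by
      rw [pow_two, key, hMM]
      have h3 : (fun i => ((|lam i| * |lam i| : ℝ) : ℂ)) = fun i => ((lam i * lam i : ℝ) : ℂ) := by
        funext i
        rw [abs_mul_abs_self]
      rw [h3]
    have habs_eq : psqrt (Mᴴ * M) = U * Matrix.diagonal (fun i => ((|lam i| : ℝ) : ℂ)) * Uᴴ := by
      rw [psqrt_eq_sqrt hMMpsd]
      exact (habs.eq_sqrt_of_sq_eq hMMpsd hsq).symm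
    have hWM : (U * Matrix.diagonal (fun i => ((Real.sign (lam i) : ℝ) : ℂ)) * Uᴴ) * M
        = U * Matrix.diagonal (fun i => ((Real.sign (lam i) * lam i : ℝ) : ℂ)) * Uᴴ := by
      conv_lhs => rw [hspec]
      rw [key]
    rw [habs_eq, hWM, tr_key, tr_key]
    congr 1
    refine Finset.sum_congr rfl fun i _ => ?_
    rw [sign_mul_self]

lemma main_aux {d : ℕ} {I : Type} [Fintype I] (a b : I → Mat d) (ρ : Mat d)
    (haP : ∀ i, (a i).PosSemidef) (hbP : ∀ i, (b i).PosSemidef) (hρ : ρ.PosSemidef)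
    (hAs : ((1 : Mat d) - ∑ i, a i * a i).PosSemidef)
    (hBs : ((1 : Mat d) - ∑ i, b i * b i).PosSemidef)
    (hρ1 : ρ.trace.re ≤ 1) :
    (psqrt ((∑ i, (a i * ρ * a i - b i * ρ * b i))ᴴ *
        (∑ i, (a i * ρ * a i - b i * ρ * b i)))).trace.re ≤
      2 * Real.sqrt (∑ i, ((a i - b i) * (a i - b i) * ρ).trace.re) := by
  classical
  set r : Mat d := hρ.sqrt with hr_def
  have hrr : r * r = ρ := hρ.sqrt_mul_self
  have hrh : rᴴ = r := hρ.posSemidef_sqrt.1.eq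
  have hah : ∀ i, (a i)ᴴ = a i := fun i => (haP i).1.eq
  have hbh : ∀ i, (b i)ᴴ = b i := fun i => (hbP i).1.eq
  have hch : ∀ i, (a i - b i)ᴴ = a i - b i := fun i => by
    rw [Matrix.conjTranspose_sub, hah, hbh]
  have hMh : (∑ i, (a i * ρ * a i - b i * ρ * b i)).IsHermitian := by
    show _ᴴ = _
    rw [Matrix.conjTranspose_sum]
    refine Finset.sum_congr rfl fun i _ => ?_
    simp [Matrix.conjTranspose_sub, Matrix.conjTranspose_mul, hah, hbh, hρ.1.eq,
      Matrix.mul_assoc]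
  obtain ⟨W, hWh, hWc, htn⟩ := exists_contraction hMh
  rw [htn]
  have hherm : ∀ Z : Mat d, Zᴴ = Z → (r * Z * W)ᴴ = W * (Z * r) := by
    intro Z hZ
    rw [Matrix.conjTranspose_mul, Matrix.conjTranspose_mul, hWh, hZ, hrh]
  -- expand W * M as two sums of Xᴴ * Y form
  have expand : W * (∑ i, (a i * ρ * a i - b i * ρ * b i))
      = (∑ i, (r * a i * W)ᴴ * (r * (a i - b i)))
        + ∑ i, (r * (a i - b i) * W)ᴴ * (r * b i) := by
    rw [Finset.mul_sum, ← Finset.sum_add_distrib]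
    refine Finset.sum_congr rfl fun i _ => ?_
    rw [hherm _ (hah i), hherm _ (hch i), ← hrr]
    noncomm_ring
  rw [expand, Matrix.trace_add, Matrix.trace_sum, Matrix.trace_sum, Complex.add_re]
  have cs1 := cs_matrix (fun i => r * a i * W) (fun i => r * (a i - b i))
  have cs2 := cs_matrix (fun i => r * (a i - b i) * W) (fun i => r * b i)
  -- abbreviations for the four squared norms
  set SXa := ∑ i, (((r * a i * W)ᴴ * (r * a i * W)).trace).re with hSXa_def
  set SY := ∑ i, (((r * (a i - b i))ᴴ * (r * (a i - b i))).trace).re with hSY_def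
  set SX' := ∑ i, (((r * (a i - b i) * W)ᴴ * (r * (a i - b i) * W)).trace).re with hSX'_def
  set SY' := ∑ i, (((r * b i)ᴴ * (r * b i)).trace).re with hSY'_def
  set S := ∑ i, (((a i - b i) * (a i - b i) * ρ).trace).re with hS_def
  -- identification of SY with S
  have hYterm : ∀ i, ((r * (a i - b i))ᴴ * (r * (a i - b i))).trace
      = ((a i - b i) * (a i - b i) * ρ).trace := by
    intro i
    have he : (r * (a i - b i))ᴴ * (r * (a i - b i)) = (a i - b i) * ρ * (a i - b i) := by
      rw [Matrix.conjTranspose_mul, hch i, hrh, ← hrr]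
      noncomm_ring
    rw [he, Matrix.trace_mul_cycle]
  have hSY_eq : SY = S := by
    rw [hSY_def, hS_def]
    exact Finset.sum_congr rfl fun i _ => by rw [hYterm i]
  -- sandwich bounds
  have hsand : ∀ Z : Mat d, Zᴴ = Z →
      (((r * Z * W)ᴴ * (r * Z * W)).trace).re ≤ ((Z * Z * ρ).trace).re := by
    intro Z hZ
    have he : (r * Z * W)ᴴ * (r * Z * W) = W * (Z * ρ * Z) * W := by
      rw [hherm _ hZ, ← hrr]
      noncomm_ring
    have hpsd : (Z * ρ * Z).PosSemidef := by
      have := hρ.mul_mul_conjTranspose_same Z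
      rwa [hZ] at this
    have h1 := re_trace_sandwich_le hpsd hWc
    have h2 : (Z * ρ * Z).trace = (Z * Z * ρ).trace := by
      rw [Matrix.trace_mul_cycle]
    rw [he]
    rw [h2] at h1
    exact h1
  -- plain squared-norm identities for Y'
  have hY'term : ∀ i, ((r * b i)ᴴ * (r * b i)).trace = (b i * b i * ρ).trace := by
    intro i
    have he : (r * b i)ᴴ * (r * b i) = b i * ρ * b i := by
      rw [Matrix.conjTranspose_mul, hbh i, hrh, ← hrr]
      noncomm_ring
    rw [he, Matrix.trace_mul_cycle]
  -- bounding sums of Tr(c c ρ) type by 1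
  have hbound : ∀ c : I → Mat d, (∀ i, (c i)ᴴ = c i) →
      ((1 : Mat d) - ∑ i, c i * c i).PosSemidef →
      ∑ i, ((c i * c i * ρ).trace).re ≤ 1 := by
    intro c hc hcs
    have h1 : ∑ i, ((c i * c i * ρ).trace).re = (((∑ i, c i * c i) * ρ).trace).re := by
      rw [Finset.sum_mul, Matrix.trace_sum, Complex.re_sum]
    have h2 := trace_mul_psd_re_nonneg hcs hρ
    have h3 : ((1 : Mat d) - ∑ i, c i * c i) * ρ = ρ - (∑ i, c i * c i) * ρ := by
      rw [sub_mul, one_mul]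
    rw [h3, Matrix.trace_sub, Complex.sub_re] at h2
    rw [h1]
    linarith
  -- nonnegativity facts
  have hnn : ∀ Z : Mat d, 0 ≤ ((Zᴴ * Z).trace).re := fun Z =>
    rTr_psd_nonneg (Matrix.posSemidef_conjTranspose_mul_self Z)
  have hSXa_nn : 0 ≤ SXa := Finset.sum_nonneg fun i _ => hnn _
  have hSY_nn : 0 ≤ SY := Finset.sum_nonneg fun i _ => hnn _
  have hSX'_nn : 0 ≤ SX' := Finset.sum_nonneg fun i _ => hnn _
  have hSY'_nn : 0 ≤ SY' := Finset.sum_nonneg fun i _ => hnn _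
  have hS_nn : 0 ≤ S := hSY_eq ▸ hSY_nn
  -- SXa ≤ 1
  have hSXa_le : SXa ≤ 1 := by
    have h1 : SXa ≤ ∑ i, ((a i * a i * ρ).trace).re := by
      rw [hSXa_def]
      exact Finset.sum_le_sum fun i _ => hsand (a i) (hah i)
    exact h1.trans (hbound a hah hAs)
  -- SX' ≤ S
  have hSX'_le : SX' ≤ S := by
    rw [hSX'_def, hS_def]
    exact Finset.sum_le_sum fun i _ => hsand (a i - b i) (hch i)
  -- SY' ≤ 1
  have hSY'_le : SY' ≤ 1 := by
    have h1 : SY' = ∑ i, ((b i * b i * ρ).trace).re := by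
      rw [hSY'_def]
      exact Finset.sum_congr rfl fun i _ => by rw [hY'term i]
    rw [h1]
    exact hbound b hbh hBs
  -- put it together
  have hb1 : Real.sqrt SXa * Real.sqrt SY ≤ Real.sqrt S := by
    rw [hSY_eq]
    calc Real.sqrt SXa * Real.sqrt S ≤ 1 * Real.sqrt S :=
          mul_le_mul_of_nonneg_right (Real.sqrt_le_one.mpr hSXa_le) (Real.sqrt_nonneg _)
      _ = Real.sqrt S := one_mul _
  have hb2 : Real.sqrt SX' * Real.sqrt SY' ≤ Real.sqrt S := by
    calc Real.sqrt SX' * Real.sqrt SY' ≤ Real.sqrt S * 1 :=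
          mul_le_mul (Real.sqrt_le_sqrt hSX'_le) (Real.sqrt_le_one.mpr hSY'_le)
            (Real.sqrt_nonneg _) (Real.sqrt_nonneg _)
      _ = Real.sqrt S := mul_one _
  have e1 : (∑ i, ((r * a i * W)ᴴ * (r * (a i - b i))).trace).re ≤ Real.sqrt S :=
    cs1.trans hb1
  have e2 : (∑ i, ((r * (a i - b i) * W)ᴴ * (r * b i)).trace).re ≤ Real.sqrt S :=
    cs2.trans hb2
  linarith


end AuxStatement11

theorem statement11 (d : ℕ) (I : Type) [Fintype I] (A B : I → Mat d) (ρ : Mat d)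
    (hA : ∀ i, (A i).PosSemidef) (hB : ∀ i, (B i).PosSemidef)
    (hAs : PSDle (∑ i, A i) 1) (hBs : PSDle (∑ i, B i) 1)
    (hρ : ρ.PosSemidef) (hρ1 : rTr ρ ≤ 1) :
    traceNorm (∑ i, (psqrt (A i) * ρ * psqrt (A i) - psqrt (B i) * ρ * psqrt (B i))) ≤
      2 * Real.sqrt (∑ i,
        rTr ((psqrt (A i) - psqrt (B i)) * (psqrt (A i) - psqrt (B i)) * ρ)) := by
  have h1 : (∑ i, psqrt (A i) * psqrt (A i)) = ∑ i, A i :=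
    Finset.sum_congr rfl fun i _ => by rw [psqrt_eq_sqrt (hA i), (hA i).sqrt_mul_self]
  have h2 : (∑ i, psqrt (B i) * psqrt (B i)) = ∑ i, B i :=
    Finset.sum_congr rfl fun i _ => by rw [psqrt_eq_sqrt (hB i), (hB i).sqrt_mul_self]
  exact main_aux (fun i => psqrt (A i)) (fun i => psqrt (B i)) ρ
    (fun i => by show (psqrt (A i)).PosSemidef; rw [psqrt_eq_sqrt (hA i)]; exact (hA i).posSemidef_sqrt)
    (fun i => by show (psqrt (B i)).PosSemidef; rw [psqrt_eq_sqrt (hB i)]; exact (hB i).posSemidef_sqrt) hρ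
    (by rw [h1]; exact hAs) (by rw [h2]; exact hBs) hρ1

end

end MIP
end

section
/- Let n ∈ ℕ, let ε ≥ 0, and let S ⊆ F₂^n be a nonempty finite ε-biased set. Let F be a finite field of characteristic two and let c = (c₁,…,c_n) ∈ F^n with c ≠ 0. Then Pr_{ζ∈S}[Σ_{i=1}^n ζ_i·c_i = 0] ≤ (1+ε)/2, where ζ is uniform in S, ζ_i·c_i means c_i if ζ_i = 1 and 0 if ζ_i = 0, and the sum is taken in F. -/
open scoped Kronecker ComplexConjugate ComplexOrder Matrix

namespace MIP

noncomputable section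

variable {F : Type*} [Field F] [Fintype F] [DecidableEq F]

theorem statement17 (n : ℕ) (ε : ℝ) (Sb : Finset (Fin n → ZMod 2))
    (F : Type) [Field F] [Fintype F] [DecidableEq F]
    (hε : 0 ≤ ε) (hS : Sb.Nonempty)
    (hbias : ∀ c : Fin n → ZMod 2, c ≠ 0 →
      |((Sb.filter fun ζ => ∑ i, c i * ζ i = 0).card : ℝ) / Sb.card -
        ((Sb.filter fun ζ => ∑ i, c i * ζ i = 1).card : ℝ) / Sb.card| ≤ ε)
    (hchar : CharP F 2)
    (c : Fin n → F) (hc : c ≠ 0) :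
    ((Sb.filter fun ζ => (∑ i, if ζ i = 1 then c i else 0) = 0).card : ℝ) / Sb.card ≤
      (1 + ε) / 2 := by
  classical
  haveI := hchar
  letI : Module (ZMod 2) F := AddCommGroup.zmodModule (by
    intro x
    rw [two_nsmul]
    exact CharTwo.add_self_eq_zero x)
  obtain ⟨i0, hi0⟩ : ∃ i, c i ≠ 0 := by
    by_contra h; push_neg at h; exact hc (funext h)
  obtain ⟨φ, hφ⟩ : ∃ φ : Module.Dual (ZMod 2) F, φ (c i0) ≠ 0 := by
    by_contra h; push_neg at h
    exact hi0 ((Module.forall_dual_apply_eq_zero_iff (ZMod 2) (c i0)).mp h)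
  set c' : Fin n → ZMod 2 := fun i => φ (c i) with hc'def
  have hc' : c' ≠ 0 := fun h => hφ (by simpa [hc'def] using congrFun h i0)
  have h2 : ∀ a : ZMod 2, a = 0 ∨ a = 1 := by decide
  have key : ∀ ζ : Fin n → ZMod 2, (∑ i, if ζ i = 1 then c i else 0) = 0 →
      (∑ i, c' i * ζ i) = 0 := by
    intro ζ hζ
    have : (∑ i, c' i * ζ i) = φ (∑ i, if ζ i = 1 then c i else 0) := by
      rw [map_sum]
      refine Finset.sum_congr rfl fun i _ => ?_
      rcases h2 (ζ i) with h | h <;> simp [h, hc'def]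
    rw [this, hζ, map_zero]
  have hsub : (Sb.filter fun ζ => (∑ i, if ζ i = 1 then c i else 0) = 0) ⊆
      Sb.filter fun ζ => (∑ i, c' i * ζ i) = 0 := by
    intro ζ hζ
    simp only [Finset.mem_filter] at hζ ⊢
    exact ⟨hζ.1, key ζ hζ.2⟩
  have hcardle := Finset.card_le_card hsub
  have hNpos : (0 : ℝ) < Sb.card := by
    exact_mod_cast Finset.card_pos.mpr hS
  have hpart : (Sb.filter fun ζ => (∑ i, c' i * ζ i) = 0).card +
      (Sb.filter fun ζ => (∑ i, c' i * ζ i) = 1).card = Sb.card := by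
    have he : (Sb.filter fun ζ => (∑ i, c' i * ζ i) = 1) =
        Sb.filter fun ζ => ¬ ((∑ i, c' i * ζ i) = 0) := by
      apply Finset.filter_congr
      intro ζ _
      rcases h2 (∑ i, c' i * ζ i) with h | h <;> simp [h]
    rw [he, Finset.card_filter_add_card_filter_not]
  have hb := hbias c' hc'
  rw [abs_le] at hb
  have h1 : ((Sb.filter fun ζ => (∑ i, c' i * ζ i) = 0).card : ℝ) +
      ((Sb.filter fun ζ => (∑ i, c' i * ζ i) = 1).card : ℝ) = Sb.card := by
    exact_mod_cast hpart
  have hmono : ((Sb.filter fun ζ => (∑ i, if ζ i = 1 then c i else 0) = 0).card : ℝ) ≤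
      ((Sb.filter fun ζ => (∑ i, c' i * ζ i) = 0).card : ℝ) := by exact_mod_cast hcardle
  have hb2 := hb.2
  rw [div_sub_div_same, div_le_iff₀ hNpos] at hb2
  rw [div_le_div_iff₀ hNpos (by norm_num : (0:ℝ) < 2)]
  nlinarith

end

end MIP
end
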